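/- Let π be a prime of ℤ[ω] with π ≡ 1 (mod 3) and k ≥ 1. Then g(π², π^k) = -N(π²) if k = 3, and g(π², π^k) = 0 otherwise. -/

import Mathlib

/-- The ring of Eisenstein integers `ℤ[ω]`, represented as pairs `a + b·ω`. -/
@[ext]
structure Eisenstein where
  a : ℤ
  b : ℤ

namespace Eisenstein

instance : Zero Eisenstein := ⟨⟨0, 0⟩⟩
instance : One Eisenstein := ⟨⟨1, 0⟩⟩
instance : Add Eisenstein := ⟨fun x y => ⟨x.a + y.a, x.b + y.b⟩⟩
instance : Neg Eisenstein := ⟨fun x => ⟨-x.a, -x.b⟩⟩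
instance : Mul Eisenstein :=
  ⟨fun x y => ⟨x.a * y.a - x.b * y.b, x.a * y.b + x.b * y.a - x.b * y.b⟩⟩

@[simp] lemma zero_a : (0 : Eisenstein).a = 0 := rfl
@[simp] lemma zero_b : (0 : Eisenstein).b = 0 := rfl
@[simp] lemma one_a : (1 : Eisenstein).a = 1 := rfl
@[simp] lemma one_b : (1 : Eisenstein).b = 0 := rfl
@[simp] lemma add_a (x y : Eisenstein) : (x + y).a = x.a + y.a := rfl
@[simp] lemma add_b (x y : Eisenstein) : (x + y).b = x.b + y.b := rfl
@[simp] lemma neg_a (x : Eisenstein) : (-x).a = -x.a := rfl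
@[simp] lemma neg_b (x : Eisenstein) : (-x).b = -x.b := rfl
@[simp] lemma mul_a (x y : Eisenstein) : (x * y).a = x.a * y.a - x.b * y.b := rfl
@[simp] lemma mul_b (x y : Eisenstein) : (x * y).b = x.a * y.b + x.b * y.a - x.b * y.b := rfl

instance : CommRing Eisenstein where
  add_assoc x y z := by ext <;> simp <;> ring
  zero_add x := by ext <;> simp
  add_zero x := by ext <;> simp
  add_comm x y := by ext <;> simp <;> ring
  neg_add_cancel x := by ext <;> simp
  mul_assoc x y z := by ext <;> simp <;> ring
  one_mul x := by ext <;> simp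
  mul_one x := by ext <;> simp
  left_distrib x y z := by ext <;> simp <;> ring
  right_distrib x y z := by ext <;> simp <;> ring
  mul_comm x y := by ext <;> simp <;> ring
  zero_mul x := by ext <;> simp
  mul_zero x := by ext <;> simp
  nsmul := nsmulRec
  zsmul := zsmulRec

/-- The primitive cube root of unity `ω` in `ℤ[ω]`. -/
def ω : Eisenstein := ⟨0, 1⟩

/-- Complex conjugation on `ℤ[ω]`. -/
def conj (x : Eisenstein) : Eisenstein := ⟨x.a - x.b, -x.b⟩

/-- The norm `N(a + bω) = a² − ab + b²`. -/
def norm (x : Eisenstein) : ℤ := x.a ^ 2 - x.a * x.b + x.b ^ 2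

/-- The embedding of `ℤ[ω]` into `ℂ`, with `ω ↦ e^{2πi/3}`. -/
noncomputable def toC (x : Eisenstein) : ℂ :=
  (x.a : ℂ) + (x.b : ℂ) * Complex.exp (2 * Real.pi * Complex.I / 3)

/-- `R` is a complete system of residues modulo `n` in `ℤ[ω]`. -/
def IsResidueSystem (n : Eisenstein) (R : Finset Eisenstein) : Prop :=
  ∀ x : Eisenstein, ∃! d, d ∈ R ∧ n ∣ x - d

/-- `ě(z) = exp(2πi(z + z̄))`. -/
noncomputable def eE (z : ℂ) : ℂ :=
  Complex.exp (2 * Real.pi * Complex.I * (z + (starRingEnd ℂ) z))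

/-- `χ` is the cubic residue symbol `(m/n)₃` on `ℤ[ω]` (with values `0, 1, ω, ω²` in `ℤ[ω]`):
it is completely multiplicative in both arguments and is determined at prime moduli `π ∤ 3` by
`(m/π)₃ ≡ m^{(N(π)−1)/3} (mod π)`, `(m/π)₃ ∈ {1, ω, ω²}` for `π ∤ m`, and `(m/π)₃ = 0` for
`π ∣ m`. -/
def IsCubicResidueSymbol (χ : Eisenstein → Eisenstein → Eisenstein) : Prop :=
  (∀ m₁ m₂ n, χ (m₁ * m₂) n = χ m₁ n * χ m₂ n) ∧
  (∀ m n₁ n₂, χ m (n₁ * n₂) = χ m n₁ * χ m n₂) ∧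
  (∀ m π : Eisenstein, Prime π → ¬ π ∣ 3 → π ∣ m → χ m π = 0) ∧
  (∀ m π : Eisenstein, Prime π → ¬ π ∣ 3 → ¬ π ∣ m →
    χ m π ∈ ({1, ω, ω ^ 2} : Set Eisenstein) ∧
      π ∣ m ^ ((norm π - 1) / 3).toNat - χ m π)

/-- The generalized cubic Gauss sum `g(r,n) = Σ_{x mod n} (x/n)₃ ě(rx/n)`, computed with respect
to a complete residue system `R` modulo `n`. -/
noncomputable def gSum (χ : Eisenstein → Eisenstein → Eisenstein) (r n : Eisenstein)
    (R : Finset Eisenstein) : ℂ :=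
  ∑ x ∈ R, toC (χ x n) * eE (toC r * toC x / toC n)

end Eisenstein

namespace Eisenstein

/-! ### Basic ring facts -/

def ι : ℤ →+* Eisenstein where
  toFun m := ⟨m, 0⟩
  map_one' := rfl
  map_mul' x y := by ext <;> simp
  map_zero' := rfl
  map_add' x y := by ext <;> simp

lemma intCast_def (m : ℤ) : ((m : ℤ) : Eisenstein) = ⟨m, 0⟩ := (eq_intCast ι m).symm

lemma three_def : (3 : Eisenstein) = ⟨3, 0⟩ := by
  have : (3 : Eisenstein) = ((3 : ℤ) : Eisenstein) := by norm_cast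
  rw [this, intCast_def]

lemma norm_mul (x y : Eisenstein) : norm (x * y) = norm x * norm y := by
  simp only [norm, mul_a, mul_b]; ring

lemma norm_nonneg (x : Eisenstein) : 0 ≤ norm x := by
  have h : 4 * norm x = (2 * x.a - x.b) ^ 2 + 3 * x.b ^ 2 := by simp [norm]; ring
  nlinarith [sq_nonneg (2 * x.a - x.b), sq_nonneg x.b]

lemma norm_eq_zero_iff {x : Eisenstein} : norm x = 0 ↔ x = 0 := by
  constructor
  · intro h
    have h4 : (2 * x.a - x.b) ^ 2 + 3 * x.b ^ 2 = 0 := by simp [norm] at h; nlinarith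
    have hb : x.b = 0 := by nlinarith [sq_nonneg (2 * x.a - x.b), sq_nonneg x.b]
    have ha : x.a = 0 := by nlinarith [sq_nonneg (2 * x.a - x.b)]
    ext <;> simp [ha, hb]
  · rintro rfl; simp [norm]

lemma mul_conj (x : Eisenstein) : x * conj x = ⟨norm x, 0⟩ := by
  ext <;> simp [conj, norm] <;> ring

lemma conj_mul' (x y : Eisenstein) : conj (x * y) = conj x * conj y := by
  ext <;> simp [conj] <;> ring

@[simp] lemma sub_a (x y : Eisenstein) : (x - y).a = x.a - y.a := rfl
@[simp] lemma sub_b (x y : Eisenstein) : (x - y).b = x.b - y.b := rfl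

lemma conj_sub (x y : Eisenstein) : conj (x - y) = conj x - conj y := by
  ext <;> simp [conj] <;> ring

lemma conj_eq_zero {x : Eisenstein} (h : conj x = 0) : x = 0 := by
  have ha := congrArg Eisenstein.a h
  have hb := congrArg Eisenstein.b h
  simp [conj] at ha hb
  ext <;> simp <;> omega

lemma isUnit_of_norm_eq_one {x : Eisenstein} (h : norm x = 1) : IsUnit x := by
  refine IsUnit.of_mul_eq_one (conj x) ?_
  rw [mul_conj, h]; rfl

/-! ### `toC` facts -/

noncomputable def ζ : ℂ := Complex.exp (2 * Real.pi * Complex.I / 3)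

lemma toC_def' (x : Eisenstein) : toC x = (x.a : ℂ) + (x.b : ℂ) * ζ := rfl

lemma zeta_eq : ζ = Complex.exp ((2 * Real.pi / 3 : ℝ) * Complex.I) := by
  rw [ζ]; congr 1; push_cast; ring

lemma zeta_pow_three : ζ ^ 3 = 1 := by
  rw [ζ, ← Complex.exp_nat_mul]
  have h : ((3 : ℕ) : ℂ) * (2 * Real.pi * Complex.I / 3) = (1 : ℤ) * (2 * Real.pi * Complex.I) := by
    push_cast; ring
  rw [h, Complex.exp_int_mul_two_pi_mul_I]

lemma zeta_ne_one : ζ ≠ 1 := by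
  intro h
  rw [ζ, Complex.exp_eq_one_iff] at h
  obtain ⟨n, hn⟩ := h
  have h2 : (2 * Real.pi * Complex.I) ≠ 0 := Complex.two_pi_I_ne_zero
  have hcan : (1 : ℂ) * (2 * Real.pi * Complex.I) = ((n : ℂ) * 3) * (2 * Real.pi * Complex.I) := by
    linear_combination (3 : ℂ) * hn
  have h13 : (1 : ℂ) = (n : ℂ) * 3 := mul_right_cancel₀ h2 hcan
  have : ((1 : ℤ) : ℂ) = ((n * 3 : ℤ) : ℂ) := by push_cast; linear_combination h13
  have := Int.cast_injective (α := ℂ) this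
  omega

lemma zeta_sq : ζ ^ 2 + ζ + 1 = 0 := by
  have h3 : ζ ^ 3 - 1 = 0 := by rw [zeta_pow_three]; ring
  have : (ζ - 1) * (ζ ^ 2 + ζ + 1) = 0 := by linear_combination h3
  rcases mul_eq_zero.mp this with h | h
  · exact absurd (sub_eq_zero.mp h) zeta_ne_one
  · exact h

lemma zeta_sq_ne_one : ζ ^ 2 ≠ 1 := by
  intro h
  have : ζ = ζ ^ 3 := by rw [pow_succ, h, one_mul]
  rw [zeta_pow_three] at this
  exact zeta_ne_one this

lemma zeta_im_ne : ζ.im ≠ 0 := by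
  rw [zeta_eq, Complex.exp_ofReal_mul_I_im]
  have hpi := Real.pi_pos
  have : 0 < Real.sin (2 * Real.pi / 3) :=
    Real.sin_pos_of_pos_of_lt_pi (by linarith) (by linarith)
  linarith

lemma toC_add (x y : Eisenstein) : toC (x + y) = toC x + toC y := by
  simp [toC_def']; push_cast; ring

lemma toC_mul (x y : Eisenstein) : toC (x * y) = toC x * toC y := by
  simp only [toC_def', mul_a, mul_b]
  push_cast
  linear_combination (-(x.b : ℂ) * (y.b : ℂ)) * zeta_sq

lemma toC_zero : toC (0 : Eisenstein) = 0 := by simp [toC_def']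

lemma toC_one : toC (1 : Eisenstein) = 1 := by simp [toC_def']

lemma toC_sub (x y : Eisenstein) : toC (x - y) = toC x - toC y := by
  simp only [toC_def', sub_a, sub_b]
  push_cast; ring

lemma toC_eq_zero {x : Eisenstein} (h : toC x = 0) : x = 0 := by
  rw [toC_def'] at h
  have him : (x.b : ℝ) * ζ.im = 0 := by
    have := congrArg Complex.im h
    simpa using this
  have hb : x.b = 0 := by
    rcases mul_eq_zero.mp him with h' | h'
    · exact_mod_cast h'
    · exact absurd h' zeta_im_ne
  have ha : x.a = 0 := by
    rw [hb] at h; simpa using h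
  ext <;> simp [ha, hb]

lemma toC_ne_zero {x : Eisenstein} (h : x ≠ 0) : toC x ≠ 0 := fun h' => h (toC_eq_zero h')

lemma toC_inj {x y : Eisenstein} (h : toC x = toC y) : x = y := by
  have h0 : x - y = 0 := toC_eq_zero (by rw [toC_sub, h, sub_self])
  exact sub_eq_zero.mp h0

noncomputable def toCHom : Eisenstein →+* ℂ where
  toFun := toC
  map_one' := toC_one
  map_mul' := toC_mul
  map_zero' := toC_zero
  map_add' := toC_add

instance : IsDomain Eisenstein :=
  Function.Injective.isDomain toCHom (fun _ _ h => toC_inj h)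

lemma toC_int (m : ℤ) : toC ⟨m, 0⟩ = (m : ℂ) := by simp [toC_def']

lemma zeta_ne_zero : ζ ≠ 0 := by
  intro h
  have := zeta_pow_three
  rw [h] at this; simp at this

lemma star_zeta : (starRingEnd ℂ) ζ = ζ ^ 2 := by
  have habs1 : ‖ζ‖ = 1 := by
    rw [zeta_eq, Complex.norm_exp_ofReal_mul_I]
  have habs : ζ * (starRingEnd ℂ) ζ = 1 := by
    rw [Complex.mul_conj, Complex.normSq_eq_norm_sq, habs1]; norm_num
  have h3 : ζ * ζ ^ 2 = 1 := by
    rw [← pow_succ']; exact zeta_pow_three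
  exact mul_left_cancel₀ zeta_ne_zero (habs.trans h3.symm)

lemma toC_conj (x : Eisenstein) : toC (conj x) = (starRingEnd ℂ) (toC x) := by
  rw [toC_def', toC_def']
  rw [map_add, map_mul]
  simp only [map_intCast, star_zeta, conj]
  push_cast
  linear_combination (-(x.b : ℂ)) * zeta_sq

/-! ### Additive characters -/

def tr (x : Eisenstein) : ℤ := 2 * x.a - x.b

lemma self_add_conj (x : Eisenstein) : x + conj x = ⟨tr x, 0⟩ := by
  ext <;> simp [conj, tr] <;> ring

lemma eE_add (z w : ℂ) : eE (z + w) = eE z * eE w := by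
  rw [eE, eE, eE, ← Complex.exp_add]
  congr 1
  rw [map_add]
  ring

lemma eE_toC (y : Eisenstein) : eE (toC y) = 1 := by
  rw [eE, ← toC_conj, ← toC_add, self_add_conj, toC_int, mul_comm]
  exact Complex.exp_int_mul_two_pi_mul_I _

noncomputable def ψ (n x : Eisenstein) : ℂ := eE (toC x / toC n)

lemma psi_add (n x y : Eisenstein) : ψ n (x + y) = ψ n x * ψ n y := by
  rw [ψ, ψ, ψ, toC_add, add_div, eE_add]

lemma psi_dvd {n x : Eisenstein} (hn : n ≠ 0) (h : n ∣ x) : ψ n x = 1 := by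
  obtain ⟨c, rfl⟩ := h
  rw [ψ, toC_mul, mul_div_cancel_left₀ _ (toC_ne_zero hn)]
  exact eE_toC c

lemma psi_period {n x y : Eisenstein} (hn : n ≠ 0) (h : n ∣ x - y) : ψ n x = ψ n y := by
  have h2 : ψ n ((x - y) + y) = ψ n (x - y) * ψ n y := psi_add n _ y
  rw [sub_add_cancel] at h2
  rw [h2, psi_dvd hn h, one_mul]

lemma psi_cancel {d : Eisenstein} (n x : Eisenstein) (hd : d ≠ 0) :
    ψ (d * n) (d * x) = ψ n x := by
  rw [ψ, ψ, toC_mul, toC_mul, mul_div_mul_left _ _ (toC_ne_zero hd)]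

lemma norm_ne_zero {n : Eisenstein} (hn : n ≠ 0) : (norm n : ℤ) ≠ 0 :=
  fun h => hn (norm_eq_zero_iff.mp h)

lemma psi_val {n : Eisenstein} (x : Eisenstein) (hn : n ≠ 0) :
    ψ n x = Complex.exp (2 * Real.pi * Complex.I * ((tr (x * conj n) : ℂ) / ((norm n : ℤ) : ℂ))) := by
  have hN0 : ((norm n : ℤ) : ℂ) ≠ 0 := Int.cast_ne_zero.mpr (norm_ne_zero hn)
  have h1 : toC n * toC (conj n) = ((norm n : ℤ) : ℂ) := by
    rw [← toC_mul, mul_conj, toC_int]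
  have hq : toC x / toC n = toC (x * conj n) / ((norm n : ℤ) : ℂ) := by
    rw [toC_mul, div_eq_div_iff (toC_ne_zero hn) hN0]
    linear_combination (-(toC x)) * h1
  rw [ψ, hq, eE]
  congr 1
  have hstar : (starRingEnd ℂ) (toC (x * conj n) / ((norm n : ℤ) : ℂ))
      = toC (conj (x * conj n)) / ((norm n : ℤ) : ℂ) := by
    rw [map_div₀, ← toC_conj]
    congr 1
    simp
  rw [hstar, ← add_div, ← toC_add, self_add_conj, toC_int]

lemma psi_eq_one {n x : Eisenstein} (hn : n ≠ 0) (h : ψ n x = 1) :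
    (norm n : ℤ) ∣ tr (x * conj n) := by
  rw [psi_val x hn, Complex.exp_eq_one_iff] at h
  obtain ⟨m, hm⟩ := h
  have hN0 : ((norm n : ℤ) : ℂ) ≠ 0 := Int.cast_ne_zero.mpr (norm_ne_zero hn)
  have h2 : (2 * Real.pi * Complex.I) ≠ 0 := Complex.two_pi_I_ne_zero
  have hq : ((tr (x * conj n) : ℤ) : ℂ) / ((norm n : ℤ) : ℂ) = (m : ℂ) := by
    have := mul_right_cancel₀ h2 (show ((tr (x * conj n) : ℤ) : ℂ) / ((norm n : ℤ) : ℂ) * (2 * Real.pi * Complex.I) = (m : ℂ) * (2 * Real.pi * Complex.I) by linear_combination hm)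
    exact this
  refine ⟨m, ?_⟩
  have : ((tr (x * conj n) : ℤ) : ℂ) = ((norm n * m : ℤ) : ℂ) := by
    push_cast
    rw [div_eq_iff hN0] at hq
    linear_combination hq
  exact_mod_cast this

/-! ### Arithmetic facts about `π` -/

section PiFacts

variable {π : Eisenstein} (hπ : Prime π) (h1 : (3 : Eisenstein) ∣ π - 1)

include hπ h1

lemma pi_not_dvd_three : ¬ π ∣ 3 := by
  intro h
  have h2 : π ∣ π - 1 := h.trans h1
  have h3 : π ∣ (1 : Eisenstein) := (dvd_sub_right (dvd_refl π)).mp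
    (by simpa using h2)
  exact hπ.not_unit (isUnit_of_dvd_one h3)

lemma norm_pi_mod_three : 3 ∣ norm π - 1 := by
  obtain ⟨γ, hγ⟩ := h1
  have ha : π.a = 1 + 3 * γ.a := by
    have := congrArg Eisenstein.a hγ
    simp [three_def] at this
    omega
  have hb : π.b = 3 * γ.b := by
    have := congrArg Eisenstein.b hγ
    simp [three_def] at this
    omega
  refine ⟨2 * γ.a - γ.b + 3 * γ.a ^ 2 - 3 * γ.a * γ.b + 3 * γ.b ^ 2, ?_⟩
  rw [norm, ha, hb]; ring

lemma norm_pi_ge_four : 4 ≤ norm π := by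
  have h0 : norm π ≠ 0 := norm_ne_zero hπ.ne_zero
  have hn1 : norm π ≠ 1 := fun h => hπ.not_unit (isUnit_of_norm_eq_one h)
  have hpos : 0 ≤ norm π := norm_nonneg π
  have hmod := norm_pi_mod_three hπ h1
  omega

lemma norm_pi_pos : 0 < norm π := lt_of_lt_of_le (by norm_num) (norm_pi_ge_four hπ h1)

lemma psi_pi_ne_one : ∃ a, ψ π a ≠ 1 := by
  by_contra hcon
  push_neg at hcon
  have hπ0 : π ≠ 0 := hπ.ne_zero
  set N := norm π with hN
  have e1 : tr (1 * conj π) = 2 * π.a - π.b := by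
    simp [tr, conj]; ring
  have e2 : tr (ω * conj π) = 2 * π.b - π.a := by
    simp [tr, conj, ω]
  have d1 : N ∣ 2 * π.a - π.b := by
    have := psi_eq_one hπ0 (hcon 1); rwa [e1] at this
  have d2 : N ∣ 2 * π.b - π.a := by
    have := psi_eq_one hπ0 (hcon ω); rwa [e2] at this
  obtain ⟨u, hu⟩ : N ∣ 3 * π.a := by
    have : 3 * π.a = 2 * (2 * π.a - π.b) + (2 * π.b - π.a) := by ring
    rw [this]; exact dvd_add (Dvd.dvd.mul_left d1 2) d2
  obtain ⟨v, hv⟩ : N ∣ 3 * π.b := by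
    have : 3 * π.b = (2 * π.a - π.b) + 2 * (2 * π.b - π.a) := by ring
    rw [this]; exact dvd_add d1 (Dvd.dvd.mul_left d2 2)
  have hN0 : N ≠ 0 := norm_ne_zero hπ0
  have h9 : N ∣ 9 := by
    have key : 9 * N = N * (N * (u ^ 2 - u * v + v ^ 2)) := by
      have h99 : 9 * N = (3 * π.a) ^ 2 - (3 * π.a) * (3 * π.b) + (3 * π.b) ^ 2 := by
        rw [hN, norm]; ring
      rw [h99, hu, hv]; ring
    have h9' : 9 = N * (u ^ 2 - u * v + v ^ 2) :=
      mul_left_cancel₀ hN0 (by linear_combination key : N * 9 = N * (N * (u ^ 2 - u * v + v ^ 2)))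
    exact ⟨_, h9'⟩
  have hge : 4 ≤ N := norm_pi_ge_four hπ h1
  have hle : N ≤ 9 := Int.le_of_dvd (by norm_num) h9
  have hmod : 3 ∣ N - 1 := norm_pi_mod_three hπ h1
  obtain ⟨w, hw⟩ := h9
  interval_cases N <;> omega

end PiFacts

/-! ### Residue systems -/

section Residue

lemma rep_spec {n : Eisenstein} {R : Finset Eisenstein} (hR : IsResidueSystem n R) :
    ∃ rep : Eisenstein → Eisenstein, (∀ x, rep x ∈ R) ∧ (∀ x, n ∣ x - rep x) ∧
      (∀ x d, d ∈ R → n ∣ x - d → d = rep x) := by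
  choose rep hmem hdvd using fun x => (hR x).exists
  exact ⟨rep, hmem, hdvd, fun x d hd hdd => (hR x).unique ⟨hd, hdd⟩ ⟨hmem x, hdvd x⟩⟩

lemma sum_shift {n : Eisenstein} {R : Finset Eisenstein} (hR : IsResidueSystem n R)
    (f : Eisenstein → ℂ) (hf : ∀ x y, n ∣ x - y → f x = f y) (a : Eisenstein) :
    ∑ x ∈ R, f (x + a) = ∑ x ∈ R, f x := by
  obtain ⟨rep, hmem, hdvd, huni⟩ := rep_spec hR
  refine Finset.sum_nbij' (i := fun x => rep (x + a)) (j := fun y => rep (y - a))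
    (fun x _ => hmem _) (fun y _ => hmem _) ?_ ?_ ?_
  · intro x hx
    refine (huni _ x hx ?_).symm
    have h1 := hdvd (x + a)
    have : (rep (x + a) - a) - x = -((x + a) - rep (x + a)) := by ring
    rw [this]
    exact dvd_neg.mpr h1
  · intro y hy
    refine (huni _ y hy ?_).symm
    have h1 := hdvd (y - a)
    have : (rep (y - a) + a) - y = -((y - a) - rep (y - a)) := by ring
    rw [this]
    exact dvd_neg.mpr h1
  · intro x _
    exact hf _ _ (hdvd (x + a))

lemma sum_mulshift {n : Eisenstein} {R : Finset Eisenstein} (hR : IsResidueSystem n R)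
    (f : Eisenstein → ℂ) (hf : ∀ x y, n ∣ x - y → f x = f y) (u : Eisenstein)
    (hu : ∀ z, n ∣ u * z → n ∣ z) :
    ∑ x ∈ R, f (u * x) = ∑ x ∈ R, f x := by
  obtain ⟨rep, hmem, hdvd, huni⟩ := rep_spec hR
  have hinj : ∀ x y : Eisenstein, x ∈ R → y ∈ R → rep (u * x) = rep (u * y) → x = y := by
    intro x y hx hy hxy
    have h1 : n ∣ u * x - u * y := by
      have e : u * x - u * y = (u * x - rep (u * x)) - (u * y - rep (u * y)) := by
        rw [hxy]; ring
      rw [e]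
      exact dvd_sub (hdvd _) (hdvd _)
    have h2 : n ∣ x - y := by
      have : x - y = (x - y) := rfl
      have := hu (x - y) (by rwa [mul_sub])
      exact this
    have hyx : y = rep x := huni x y hy h2
    have hxx : x = rep x := huni x x hx (by simp)
    exact hxx.trans hyx.symm
  refine Finset.sum_bij (fun x _ => rep (u * x)) (fun x _ => hmem _) ?_ ?_ ?_
  · intro x hx y hy h
    exact hinj x y hx hy h
  · intro b hb
    have hsurj := Finset.surj_on_of_inj_on_of_card_le (fun x _ => rep (u * x))
      (fun x hx => hmem _) (fun a₁ a₂ h₁ h₂ he => hinj a₁ a₂ h₁ h₂ he) le_rfl b hb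
    obtain ⟨a, ha, hab⟩ := hsurj
    exact ⟨a, ha, hab.symm⟩
  · intro x _
    exact hf _ _ (hdvd (u * x))

end Residue

/-! ### Counting residues -/

instance : DecidableEq Eisenstein :=
  fun x y => decidable_of_iff (x.a = y.a ∧ x.b = y.b) (by cases x; cases y; simp)

lemma conj_conj (x : Eisenstein) : conj (conj x) = x := by
  ext <;> simp [conj]

lemma dvd_conj {n z : Eisenstein} (h : n ∣ z) : conj n ∣ conj z := by
  obtain ⟨c, rfl⟩ := h
  exact ⟨conj c, conj_mul' n c⟩

lemma card_res_eq {n : Eisenstein} {R R' : Finset Eisenstein}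
    (hR : IsResidueSystem n R) (hR' : IsResidueSystem n R') : R.card = R'.card := by
  obtain ⟨rep', hmem', hdvd', huni'⟩ := rep_spec hR'
  obtain ⟨rep, hmem, hdvd, huni⟩ := rep_spec hR
  refine Finset.card_bij (fun x _ => rep' x) (fun x _ => hmem' _) ?_ ?_
  · intro x hx y hy h
    have h1 : n ∣ x - y := by
      have e : x - y = (x - rep' x) - (y - rep' y) := by rw [h]; ring
      rw [e]; exact dvd_sub (hdvd' _) (hdvd' _)
    have h2 : y = rep x := huni x y hy h1
    have h3 : x = rep x := huni x x hx (by simp)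
    exact h3.trans h2.symm
  · intro y hy
    refine ⟨rep y, hmem _, ?_⟩
    refine (huni' (rep y) y hy ?_).symm
    have e : rep y - y = -(y - rep y) := by ring
    rw [e]; exact dvd_neg.mpr (hdvd _)

lemma res_compose {s t : Eisenstein} {A B : Finset Eisenstein} (hs : s ≠ 0)
    (hA : IsResidueSystem s A) (hB : IsResidueSystem t B) :
    ∃ C : Finset Eisenstein, IsResidueSystem (s * t) C ∧ C.card = A.card * B.card := by
  classical
  obtain ⟨repA, hmemA, hdvdA, huniA⟩ := rep_spec hA
  obtain ⟨repB, hmemB, hdvdB, huniB⟩ := rep_spec hB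
  refine ⟨(A ×ˢ B).image (fun p => p.1 + s * p.2), ?_, ?_⟩
  · intro x
    obtain ⟨c, hc⟩ := hdvdA x
    refine ⟨repA x + s * repB c, ⟨Finset.mem_image.mpr ⟨(repA x, repB c),
      Finset.mem_product.mpr ⟨hmemA x, hmemB c⟩, rfl⟩, ?_⟩, ?_⟩
    · have e : x - (repA x + s * repB c) = s * (c - repB c) := by
        rw [mul_sub, ← hc]; ring
      rw [e]
      exact mul_dvd_mul_left s (hdvdB c)
    · rintro d ⟨hd, hdd⟩
      obtain ⟨⟨a', b'⟩, hab, rfl⟩ := Finset.mem_image.mp hd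
      obtain ⟨ha', hb'⟩ := Finset.mem_product.mp hab
      simp only at hdd ⊢
      have hsdvd : s ∣ x - (a' + s * b') := (dvd_mul_right s t).trans hdd
      have hsa : s ∣ x - a' := by
        have e : x - a' = (x - (a' + s * b')) + s * b' := by ring
        rw [e]; exact dvd_add hsdvd (dvd_mul_right s b')
      have ha'' : a' = repA x := huniA x a' ha' hsa
      have htb : t ∣ c - b' := by
        have e : s * (c - b') = x - (a' + s * b') := by
          rw [mul_sub, ← hc, ha'']; ring
        have : s * t ∣ s * (c - b') := by rw [e]; exact hdd
        exact (mul_dvd_mul_iff_left hs).mp this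
      have hb'' : b' = repB c := huniB c b' hb' htb
      rw [ha'', hb'']
  · rw [Finset.card_image_of_injOn, Finset.card_product]
    rintro ⟨a, b⟩ hab ⟨a', b'⟩ hab' h
    simp only [Finset.mem_coe, Finset.mem_product] at hab hab'
    simp only at h
    have hsa : s ∣ a - a' := by
      have e : a - a' = s * (b' - b) := by linear_combination h
      exact ⟨b' - b, e⟩
    have haa : a = a' := by
      have h1 : a = repA a := huniA a a hab.1 (by simp)
      have h2 : a' = repA a := huniA a a' hab'.1 hsa
      exact h1.trans h2.symm
    have hbb : b = b' := by
      have : s * b = s * b' := by rw [haa] at h; linear_combination h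
      exact mul_left_cancel₀ hs this
    simp [haa, hbb]

lemma res_conj {n : Eisenstein} {R : Finset Eisenstein} (hR : IsResidueSystem n R) :
    IsResidueSystem (conj n) (R.image conj) ∧ (R.image conj).card = R.card := by
  classical
  constructor
  · intro x
    obtain ⟨d, ⟨hd, hdd⟩, huni⟩ := hR (conj x)
    refine ⟨conj d, ⟨Finset.mem_image.mpr ⟨d, hd, rfl⟩, ?_⟩, ?_⟩
    · have := dvd_conj hdd
      rwa [conj_sub, conj_conj] at this
    · rintro e ⟨he, hee⟩
      obtain ⟨d', hd', rfl⟩ := Finset.mem_image.mp he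
      have := dvd_conj hee
      rw [conj_sub, conj_conj, conj_conj] at this
      rw [huni d' ⟨hd', this⟩]
  · apply Finset.card_image_of_injOn
    intro x _ y _ h
    have := congrArg conj h
    rwa [conj_conj, conj_conj] at this

lemma int_dvd_iff (M : ℤ) (z : Eisenstein) :
    (⟨M, 0⟩ : Eisenstein) ∣ z ↔ M ∣ z.a ∧ M ∣ z.b := by
  constructor
  · rintro ⟨c, rfl⟩
    constructor
    · exact ⟨c.a, by simp⟩
    · exact ⟨c.b, by simp⟩
  · rintro ⟨⟨u, hu⟩, ⟨v, hv⟩⟩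
    exact ⟨⟨u, v⟩, by ext <;> simp [hu, hv]⟩

lemma res_int (M : ℤ) (hM : 0 < M) :
    ∃ C : Finset Eisenstein, IsResidueSystem (⟨M, 0⟩ : Eisenstein) C ∧
      C.card = M.toNat * M.toNat := by
  classical
  refine ⟨(Finset.range M.toNat ×ˢ Finset.range M.toNat).image
    (fun p => ⟨(p.1 : ℤ), (p.2 : ℤ)⟩), ?_, ?_⟩
  · intro x
    have ha1 : 0 ≤ x.a % M := Int.emod_nonneg _ (ne_of_gt hM)
    have ha2 : x.a % M < M := Int.emod_lt_of_pos _ hM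
    have hb1 : 0 ≤ x.b % M := Int.emod_nonneg _ (ne_of_gt hM)
    have hb2 : x.b % M < M := Int.emod_lt_of_pos _ hM
    refine ⟨⟨x.a % M, x.b % M⟩, ⟨?_, ?_⟩, ?_⟩
    · refine Finset.mem_image.mpr ⟨((x.a % M).toNat, (x.b % M).toNat), ?_, ?_⟩
      · refine Finset.mem_product.mpr ⟨Finset.mem_range.mpr ?_, Finset.mem_range.mpr ?_⟩ <;> omega
      · ext <;> simp <;> omega
    · rw [int_dvd_iff]
      refine ⟨⟨x.a / M, ?_⟩, ⟨x.b / M, ?_⟩⟩ <;> simp <;> rw [Int.emod_def] <;> ring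
    · rintro d ⟨hd, hdd⟩
      obtain ⟨⟨p, q⟩, hpq, rfl⟩ := Finset.mem_image.mp hd
      obtain ⟨hp, hq⟩ := Finset.mem_product.mp hpq
      rw [Finset.mem_range] at hp hq
      rw [int_dvd_iff] at hdd
      simp only at hdd
      obtain ⟨hda, hdb⟩ := hdd
      have key : ∀ (z w : ℤ), 0 ≤ w → w < M → M ∣ z - w → w = z % M := by
        intro z w hw1 hw2 hzw
        have h1 : z % M = w % M := Int.emod_eq_emod_iff_emod_sub_eq_zero.mpr
          (Int.emod_eq_zero_of_dvd hzw)
        rw [h1, Int.emod_eq_of_lt hw1 hw2]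
      have e1 : (p : ℤ) = x.a % M := key x.a p (by positivity) (by omega) (by simpa using hda)
      have e2 : (q : ℤ) = x.b % M := key x.b q (by positivity) (by omega) (by simpa using hdb)
      ext <;> simp [e1, e2]
  · rw [Finset.card_image_of_injOn, Finset.card_product, Finset.card_range]
    intro p _ p' _ h
    have h1 := congrArg Eisenstein.a h
    have h2 := congrArg Eisenstein.b h
    simp only at h1 h2
    have : p.1 = p'.1 := by exact_mod_cast h1
    have : p.2 = p'.2 := by exact_mod_cast h2
    ext <;> assumption

noncomputable instance : LinearOrder Eisenstein :=
  LinearOrder.lift' (fun x => toLex (x.a, x.b)) (by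
    intro x y h
    have h1 := congrArg (fun p => (ofLex p).1) h
    have h2 := congrArg (fun p => (ofLex p).2) h
    simp at h1 h2
    ext <;> assumption)

lemma res_coarsen {s t : Eisenstein} {S : Finset Eisenstein}
    (hS : IsResidueSystem (s * t) S) :
    ∃ A : Finset Eisenstein, IsResidueSystem s A := by
  classical
  obtain ⟨rep, hmem, hdvd, huni⟩ := rep_spec hS
  have hne : ∀ x : Eisenstein, (S.filter (fun y => s ∣ x - y)).Nonempty := by
    intro x
    exact ⟨rep x, Finset.mem_filter.mpr ⟨hmem x, (dvd_mul_right s t).trans (hdvd x)⟩⟩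
  set f : Eisenstein → Eisenstein := fun x => (S.filter (fun y => s ∣ x - y)).min' (hne x)
    with hf
  have hfdvd : ∀ x, s ∣ x - f x := by
    intro x
    have := Finset.min'_mem (S.filter (fun y => s ∣ x - y)) (hne x)
    exact (Finset.mem_filter.mp this).2
  have hfS : ∀ x, f x ∈ S := by
    intro x
    have := Finset.min'_mem (S.filter (fun y => s ∣ x - y)) (hne x)
    exact (Finset.mem_filter.mp this).1
  have hconst : ∀ x x', s ∣ x - x' → f x = f x' := by
    intro x x' h
    have : (S.filter (fun y => s ∣ x - y)) = (S.filter (fun y => s ∣ x' - y)) := by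
      apply Finset.filter_congr
      intro y _
      constructor
      · intro hy
        have e : x' - y = (x - y) - (x - x') := by ring
        rw [e]; exact dvd_sub hy h
      · intro hy
        have e : x - y = (x' - y) + (x - x') := by ring
        rw [e]; exact dvd_add hy h
    simp only [hf, this]
  refine ⟨S.image f, ?_⟩
  intro x
  refine ⟨f x, ⟨?_, hfdvd x⟩, ?_⟩
  · have : f x = f (rep x) := hconst x (rep x) ((dvd_mul_right s t).trans (hdvd x))
    rw [this]
    exact Finset.mem_image.mpr ⟨rep x, hmem x, rfl⟩
  · rintro d ⟨hd, hdd⟩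
    obtain ⟨y, hy, rfl⟩ := Finset.mem_image.mp hd
    have h1 : s ∣ y - f y := hfdvd y
    have h2 : s ∣ x - y := by
      have e : x - y = (x - f y) - (y - f y) := by ring
      rw [e]; exact dvd_sub hdd h1
    exact (hconst x y h2).symm

lemma card_dvd_filter {s t : Eisenstein} {S A T : Finset Eisenstein} (hs : s ≠ 0)
    (hS : IsResidueSystem (s * t) S) (hA : IsResidueSystem t A)
    (hT : ∀ x, x ∈ T ↔ x ∈ S ∧ s ∣ x) : T.card = A.card := by
  obtain ⟨rep, hmem, hdvd, huni⟩ := rep_spec hS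
  obtain ⟨repA, hmemA, hdvdA, huniA⟩ := rep_spec hA
  refine (Finset.card_bij (fun b _ => rep (s * b)) ?_ ?_ ?_).symm
  · intro b hb
    rw [hT]
    refine ⟨hmem _, ?_⟩
    have h1 : s * t ∣ s * b - rep (s * b) := hdvd _
    have h2 : s ∣ s * b - rep (s * b) := (dvd_mul_right s t).trans h1
    have e : rep (s * b) = s * b - (s * b - rep (s * b)) := by ring
    rw [e]
    exact dvd_sub (dvd_mul_right s b) h2
  · intro b hb b' hb' h
    have h1 : s * t ∣ s * b - s * b' := by
      have e : s * b - s * b' = (s * b - rep (s * b)) - (s * b' - rep (s * b')) := by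
        rw [h]; ring
      rw [e]; exact dvd_sub (hdvd _) (hdvd _)
    have h2 : t ∣ b - b' := by
      have : s * t ∣ s * (b - b') := by rwa [mul_sub]
      exact (mul_dvd_mul_iff_left hs).mp this
    have h3 : b' = repA b := huniA b b' hb' h2
    have h4 : b = repA b := huniA b b hb (by simp)
    exact h4.trans h3.symm
  · intro x hx
    rw [hT] at hx
    obtain ⟨hxS, y, rfl⟩ := hx
    refine ⟨repA y, hmemA _, ?_⟩
    have h1 : t ∣ y - repA y := hdvdA y
    have h2 : s * t ∣ s * repA y - s * y := by
      have e : s * repA y - s * y = s * -(y - repA y) := by ring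
      rw [e]
      exact mul_dvd_mul_left s (dvd_neg.mpr h1)
    refine (huni (s * repA y) (s * y) hxS ?_).symm
    have e : s * repA y - s * y = s * repA y - s * y := rfl
    exact h2

lemma norm_pos {n : Eisenstein} (hn : n ≠ 0) : 0 < norm n :=
  lt_of_le_of_ne (norm_nonneg n) (fun h => hn (norm_eq_zero_iff.mp h.symm))

lemma card_res {n : Eisenstein} {A : Finset Eisenstein} (hn : n ≠ 0)
    (hA : IsResidueSystem n A) : (A.card : ℤ) = norm n := by
  classical
  obtain ⟨hconj, hconjcard⟩ := res_conj hA
  obtain ⟨C, hC, hCc⟩ := res_compose hn hA hconj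
  rw [mul_conj] at hC
  obtain ⟨D, hD, hDc⟩ := res_int (norm n) (norm_pos hn)
  have hcards : C.card = D.card := card_res_eq hC hD
  rw [hCc, hDc, hconjcard] at hcards
  have : A.card = (norm n).toNat := Nat.mul_self_inj.mp hcards
  rw [this, Int.toNat_of_nonneg (norm_nonneg n)]

/-! ### Cubic residue symbol facts -/

section Chi

variable {χ : Eisenstein → Eisenstein → Eisenstein} (hχ : IsCubicResidueSymbol χ)
variable {π : Eisenstein} (hπ : Prime π) (h1 : (3 : Eisenstein) ∣ π - 1)

lemma omega_sq : (ω ^ 2 : Eisenstein) = ⟨-1, -1⟩ := by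
  rw [pow_two]; ext <;> simp [ω]

lemma omega_cube : (ω ^ 3 : Eisenstein) = 1 := by
  rw [pow_succ, omega_sq]; ext <;> simp [ω]

include hπ h1

lemma no_norm_three {d : Eisenstein} (h3 : norm d = 3) : ¬ π ∣ d := by
  rintro ⟨c, rfl⟩
  rw [norm_mul] at h3
  have hdvd : norm π ∣ 3 := ⟨norm c, h3.symm⟩
  have hle : norm π ≤ 3 := Int.le_of_dvd (by norm_num) hdvd
  have := norm_pi_ge_four hπ h1
  omega

include hχ

lemma chi_period {x y : Eisenstein} (hxy : π ∣ x - y) : χ x π = χ y π := by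
  obtain ⟨hm1, hm2, hz, hsym⟩ := hχ
  have h3 : ¬ π ∣ 3 := pi_not_dvd_three hπ h1
  by_cases hx : π ∣ x
  · have hy : π ∣ y := by
      have e : y = x - (x - y) := by ring
      rw [e]; exact dvd_sub hx hxy
    rw [hz x π hπ h3 hx, hz y π hπ h3 hy]
  · have hy : ¬ π ∣ y := by
      intro hy
      exact hx (by
        have e : x = (x - y) + y := by ring
        rw [e]; exact dvd_add hxy hy)
    obtain ⟨hxset, hxcong⟩ := hsym x π hπ h3 hx
    obtain ⟨hyset, hycong⟩ := hsym y π hπ h3 hy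
    have hpow : π ∣ x ^ ((norm π - 1) / 3).toNat - y ^ ((norm π - 1) / 3).toNat :=
      hxy.trans (sub_dvd_pow_sub_pow x y _)
    have hdiff : π ∣ χ x π - χ y π := by
      have e : χ x π - χ y π = (y ^ ((norm π - 1) / 3).toNat - χ y π)
          - (x ^ ((norm π - 1) / 3).toNat - χ x π)
          + (x ^ ((norm π - 1) / 3).toNat - y ^ ((norm π - 1) / 3).toNat) := by ring
      rw [e]; exact dvd_add (dvd_sub hycong hxcong) hpow
    simp only [Set.mem_insert_iff, Set.mem_singleton_iff] at hxset hyset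
    have hval : ∀ d : Eisenstein, norm d = 3 → χ x π - χ y π ≠ d := by
      intro d hd he
      exact no_norm_three hπ h1 hd (he ▸ hdiff)
    rcases hxset with hx1 | hx1 | hx1 <;> rcases hyset with hy1 | hy1 | hy1 <;>
      rw [hx1, hy1] <;>
      first
        | rfl
        | (exfalso
           refine hval _ ?_ (by rw [hx1, hy1])
           simp only [norm, pow_two, mul_a, mul_b, ω, sub_a, sub_b, one_a, one_b]
           norm_num)

lemma chi_pow (x : Eisenstein) : ∀ k : ℕ, 1 ≤ k → χ x (π ^ k) = (χ x π) ^ k := by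
  obtain ⟨hm1, hm2, hz, hsym⟩ := hχ
  intro k hk
  induction k with
  | zero => omega
  | succ j ih =>
    rcases Nat.eq_or_lt_of_le hk with h | h
    · rw [← h]; simp
    · have hj : 1 ≤ j := by omega
      rw [pow_succ, hm2, ih hj, pow_succ]

lemma chi_cube {x : Eisenstein} (hx : ¬ π ∣ x) : (χ x π) ^ 3 = 1 := by
  obtain ⟨hm1, hm2, hz, hsym⟩ := hχ
  have h3 : ¬ π ∣ 3 := pi_not_dvd_three hπ h1
  obtain ⟨hset, _⟩ := hsym x π hπ h3 hx
  simp only [Set.mem_insert_iff, Set.mem_singleton_iff] at hset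
  rcases hset with h | h | h <;> rw [h]
  · exact one_pow 3
  · exact omega_cube
  · rw [← pow_mul]
    rw [show 2 * 3 = 3 * 2 by ring, pow_mul, omega_cube, one_pow]

lemma chi_zero {x : Eisenstein} (hx : π ∣ x) : χ x π = 0 := by
  obtain ⟨hm1, hm2, hz, hsym⟩ := hχ
  exact hz x π hπ (pi_not_dvd_three hπ h1) hx

set_option synthInstance.maxHeartbeats 1000000 in
set_option maxHeartbeats 1600000 in
lemma chi_exists_ne_one {A : Finset Eisenstein} (hA : IsResidueSystem π A) :
    ∃ u, ¬ π ∣ u ∧ χ u π ≠ 1 := by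
  classical
  obtain ⟨hm1, hm2, hz, hsym⟩ := hχ
  by_contra hcon
  push_neg at hcon
  obtain ⟨rep, hmem, hdvd, huni⟩ := rep_spec hA
  set I := Ideal.span ({π} : Set Eisenstein) with hI
  haveI hIp : I.IsPrime := (Ideal.span_singleton_prime hπ.ne_zero).mpr hπ
  have hmk : ∀ z : Eisenstein, (Ideal.Quotient.mk I z = 0) ↔ π ∣ z := by
    intro z
    rw [Ideal.Quotient.eq_zero_iff_mem, hI, Ideal.mem_span_singleton]
  have heq : ∀ z w : Eisenstein, (Ideal.Quotient.mk I z = Ideal.Quotient.mk I w) ↔ π ∣ z - w := by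
    intro z w
    rw [Ideal.Quotient.eq, hI, Ideal.mem_span_singleton]
  have hbij : Function.Bijective (fun x : A => Ideal.Quotient.mk I (x : Eisenstein)) := by
    constructor
    · rintro ⟨x, hx⟩ ⟨y, hy⟩ h
      simp only at h
      rw [heq] at h
      have h2 : y = rep x := huni x y hy h
      have h3 : x = rep x := huni x x hx (by simp)
      exact Subtype.ext (h3.trans h2.symm)
    · intro q
      obtain ⟨z, rfl⟩ := Ideal.Quotient.mk_surjective q
      refine ⟨⟨rep z, hmem z⟩, ?_⟩
      simp only
      rw [heq]
      have e : rep z - z = -(z - rep z) := by ring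
      rw [e]; exact dvd_neg.mpr (hdvd z)
  haveI : Finite (Eisenstein ⧸ I) := Finite.of_surjective _ hbij.2
  haveI : Fintype (Eisenstein ⧸ I) := Fintype.ofFinite _
  have hcardF : (Fintype.card (Eisenstein ⧸ I) : ℤ) = norm π := by
    rw [← card_res hπ.ne_zero hA]
    congr 1
    rw [← Fintype.card_coe A]
    exact (Fintype.card_of_bijective hbij).symm
  letI : Field (Eisenstein ⧸ I) := Fintype.fieldOfDomain _
  haveI : Finite (Eisenstein ⧸ I)ˣ := inferInstance
  obtain ⟨g, hg⟩ := IsCyclic.exists_generator (α := (Eisenstein ⧸ I)ˣ)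
  have horder : orderOf g = Fintype.card (Eisenstein ⧸ I)ˣ := by
    rw [orderOf_eq_card_of_forall_mem_zpowers hg, Nat.card_eq_fintype_card]
  -- get a preimage of g
  obtain ⟨z, hzg⟩ := Ideal.Quotient.mk_surjective (g : Eisenstein ⧸ I)
  have hzne : ¬ π ∣ z := by
    rw [← hmk]
    rw [hzg]
    exact Units.ne_zero g
  have hchi : χ z π = 1 := hcon z hzne
  have hdvd1 : π ∣ z ^ ((norm π - 1) / 3).toNat - 1 := by
    have := (hsym z π hπ (pi_not_dvd_three hπ h1) hzne).2
    rwa [hchi] at this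
  set ee : ℕ := ((norm π - 1) / 3).toNat with hee
  have hgpow : g ^ ee = 1 := by
    have h0 : Ideal.Quotient.mk I (z ^ ee - 1) = 0 := (hmk _).mpr hdvd1
    rw [RingHom.map_sub, RingHom.map_pow, RingHom.map_one, sub_eq_zero, hzg] at h0
    ext
    rw [Units.val_pow_eq_pow_val, h0, Units.val_one]
  have hdvd2 : orderOf g ∣ ee := orderOf_dvd_of_pow_eq_one hgpow
  -- numerics
  obtain ⟨t, ht⟩ := norm_pi_mod_three hπ h1
  have hge4 := norm_pi_ge_four hπ h1
  have htpos : 1 ≤ t := by omega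
  have heet : (ee : ℤ) = t := by
    rw [hee, ht]
    rw [Int.mul_ediv_cancel_left _ (by norm_num : (3:ℤ) ≠ 0)]
    exact Int.toNat_of_nonneg (by omega)
  have hcardU : Fintype.card (Eisenstein ⧸ I)ˣ = Fintype.card (Eisenstein ⧸ I) - 1 := by
    classical
    exact Fintype.card_units (Eisenstein ⧸ I)
  have heepos : 0 < ee := by
    have : (0:ℤ) < ee := by rw [heet]; omega
    exact_mod_cast this
  have hle : Fintype.card (Eisenstein ⧸ I)ˣ ≤ ee :=
    Nat.le_of_dvd heepos (horder ▸ hdvd2)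
  have hcardZ : (Fintype.card (Eisenstein ⧸ I)ˣ : ℤ) = 3 * t := by
    rw [hcardU]
    have hc1 : 1 ≤ Fintype.card (Eisenstein ⧸ I) := Fintype.card_pos
    push_cast [Nat.cast_sub hc1]
    rw [hcardF]
    omega
  have : (Fintype.card (Eisenstein ⧸ I)ˣ : ℤ) ≤ (ee : ℤ) := by exact_mod_cast hle
  rw [hcardZ, heet] at this
  omega

end Chi

/-! ### Final auxiliary lemmas -/

lemma toC_pow (x : Eisenstein) (n : ℕ) : toC (x ^ n) = toC x ^ n := by
  induction n with
  | zero => simp [toC_one]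
  | succ i ih => rw [pow_succ, pow_succ, toC_mul, ih]

lemma toC_omega : toC ω = ζ := by simp [toC_def', ω]

lemma prime_pow_cancel {π : Eisenstein} (hπ : Prime π) {u : Eisenstein} (hu : ¬ π ∣ u) (j : ℕ) :
    ∀ z, π ^ j ∣ u * z → π ^ j ∣ z := by
  induction j with
  | zero => simp
  | succ i ih =>
    intro z h
    have h1 : π ∣ u * z := dvd_trans (dvd_pow_self π (Nat.succ_ne_zero i)) h
    have h2 : π ∣ z := ((hπ.dvd_mul).mp h1).resolve_left hu
    obtain ⟨w, rfl⟩ := h2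
    have h3 : π ^ (i + 1) ∣ π * (u * w) := by
      rw [show π * (u * w) = u * (π * w) by ring]; exact h
    rw [pow_succ'] at h3
    have h4 : π ^ i ∣ u * w := (mul_dvd_mul_iff_left hπ.ne_zero).mp h3
    rw [pow_succ']
    exact mul_dvd_mul_left π (ih w h4)

lemma chi_toC_ne_one {χ : Eisenstein → Eisenstein → Eisenstein} {π u : Eisenstein}
    (hset : χ u π ∈ ({1, ω, ω ^ 2} : Set Eisenstein)) (hne : χ u π ≠ 1) :
    toC (χ u π) ≠ 1 ∧ (toC (χ u π)) ^ 2 ≠ 1 := by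
  simp only [Set.mem_insert_iff, Set.mem_singleton_iff] at hset
  rcases hset with h | h | h
  · exact absurd h hne
  · rw [h, toC_omega]
    exact ⟨zeta_ne_one, zeta_sq_ne_one⟩
  · rw [h, toC_pow, toC_omega]
    refine ⟨zeta_sq_ne_one, ?_⟩
    have : (ζ ^ 2) ^ 2 = ζ := by
      rw [show (ζ ^ 2) ^ 2 = ζ ^ 3 * ζ by ring, zeta_pow_three, one_mul]
    rw [this]
    exact zeta_ne_one

end Eisenstein

open Eisenstein in
/-- For `π ≡ 1 (mod 3)` prime and `k ≥ 1`: `g(π², π^k) = -N(π²)` if `k = 3`, else `0`. -/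
theorem statement_12 (χ : Eisenstein → Eisenstein → Eisenstein)
    (hχ : IsCubicResidueSymbol χ) (π : Eisenstein) (hπ : Prime π)
    (h1 : (3 : Eisenstein) ∣ π - 1) (k : ℕ) (hk : 1 ≤ k)
    (R : Finset Eisenstein) (hR : IsResidueSystem (π ^ k) R) :
    gSum χ (π ^ 2) (π ^ k) R = if k = 3 then -((norm (π ^ 2) : ℤ) : ℂ) else 0 := by
  classical
  have hπ0 : π ≠ 0 := hπ.ne_zero
  have hm1 := hχ.1
  have hsym := hχ.2.2.2
  have h3' : ¬ π ∣ 3 := pi_not_dvd_three hπ h1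
  simp only [gSum]
  by_cases hk1 : k = 1
  · subst hk1
    rw [if_neg (by omega)]
    have hR1 : IsResidueSystem π R := by rwa [pow_one] at hR
    have hterm : ∀ x ∈ R,
        toC (χ x (π ^ 1)) * eE (toC (π ^ 2) * toC x / toC (π ^ 1)) = toC (χ x π) := by
      intro x _
      have he : toC (π ^ 2) * toC x / toC (π ^ 1) = toC (π * x) := by
        rw [pow_one, div_eq_iff (toC_ne_zero hπ0), ← toC_mul, ← toC_mul]
        congr 1
        ring
      rw [he, eE_toC, mul_one, pow_one]
    rw [Finset.sum_congr rfl hterm]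
    obtain ⟨u, hu, hune⟩ := chi_exists_ne_one hχ hπ h1 hR1
    have hper : ∀ x y : Eisenstein, π ∣ x - y → toC (χ x π) = toC (χ y π) := by
      intro x y hxy; rw [chi_period hχ hπ h1 hxy]
    have hshift := sum_mulshift hR1 (fun x => toC (χ x π)) hper u
      (fun z hz => by
        have := prime_pow_cancel hπ hu 1 z (by rwa [pow_one])
        rwa [pow_one] at this)
    have hfac : ∀ x : Eisenstein, toC (χ (u * x) π) = toC (χ u π) * toC (χ x π) := by
      intro x; rw [hm1, toC_mul]
    simp only [hfac] at hshift
    rw [← Finset.mul_sum] at hshift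
    have hz : (toC (χ u π) - 1) * ∑ x ∈ R, toC (χ x π) = 0 := by linear_combination hshift
    rcases mul_eq_zero.mp hz with h | h
    · exact absurd (by linear_combination h)
        (chi_toC_ne_one ((hsym u π hπ h3' hu).1) hune).1
    · exact h
  · by_cases hk2 : k = 2
    · subst hk2
      rw [if_neg (by omega)]
      obtain ⟨A, hA⟩ := res_coarsen (s := π) (t := π) (S := R) (by rw [← pow_two]; exact hR)
      obtain ⟨u, hu, hune⟩ := chi_exists_ne_one hχ hπ h1 hA
      have hterm : ∀ x ∈ R,
          toC (χ x (π ^ 2)) * eE (toC (π ^ 2) * toC x / toC (π ^ 2)) = toC (χ x π) ^ 2 := by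
        intro x _
        have he : toC (π ^ 2) * toC x / toC (π ^ 2) = toC x :=
          mul_div_cancel_left₀ _ (toC_ne_zero (pow_ne_zero 2 hπ0))
        rw [he, eE_toC, mul_one, chi_pow hχ hπ h1 x 2 (by omega), toC_pow]
      rw [Finset.sum_congr rfl hterm]
      have hper : ∀ x y : Eisenstein, π ^ 2 ∣ x - y → toC (χ x π) ^ 2 = toC (χ y π) ^ 2 := by
        intro x y hxy
        rw [chi_period hχ hπ h1 (dvd_trans (dvd_pow_self π two_ne_zero) hxy)]
      have hshift := sum_mulshift hR (fun x => toC (χ x π) ^ 2) hper u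
        (fun z hz => prime_pow_cancel hπ hu 2 z hz)
      have hfac : ∀ x : Eisenstein, toC (χ (u * x) π) ^ 2 = toC (χ u π) ^ 2 * toC (χ x π) ^ 2 := by
        intro x; rw [hm1, toC_mul, mul_pow]
      simp only [hfac] at hshift
      rw [← Finset.mul_sum] at hshift
      have hz : (toC (χ u π) ^ 2 - 1) * ∑ x ∈ R, toC (χ x π) ^ 2 = 0 := by
        linear_combination hshift
      rcases mul_eq_zero.mp hz with h | h
      · exact absurd (by linear_combination h)
          (chi_toC_ne_one ((hsym u π hπ h3' hu).1) hune).2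
      · exact h
    · by_cases hk3 : k = 3
      · subst hk3
        rw [if_pos rfl]
        obtain ⟨A, hA⟩ := res_coarsen (s := π ^ 2) (t := π) (S := R)
          (by rw [← pow_succ]; exact hR)
        obtain ⟨a0, ha0⟩ := psi_pi_ne_one hπ h1
        have hterm : ∀ x ∈ R,
            toC (χ x (π ^ 3)) * eE (toC (π ^ 2) * toC x / toC (π ^ 3)) =
              (if π ∣ x then (0 : ℂ) else ψ π x) := by
          intro x _
          have he : toC (π ^ 2) * toC x / toC (π ^ 3) = toC x / toC π := by
            rw [show (π : Eisenstein) ^ 3 = π ^ 2 * π from by ring, toC_mul,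
              mul_div_mul_left _ _ (toC_ne_zero (pow_ne_zero 2 hπ0))]
          rw [he]
          by_cases hx : π ∣ x
          · rw [if_pos hx, chi_pow hχ hπ h1 x 3 (by omega), chi_zero hχ hπ h1 hx]
            simp [toC_zero]
          · rw [if_neg hx, chi_pow hχ hπ h1 x 3 (by omega), chi_cube hχ hπ h1 hx,
              toC_one, one_mul]
            rfl
        rw [Finset.sum_congr rfl hterm]
        have hsplit : ∀ x ∈ R,
            (if π ∣ x then (0 : ℂ) else ψ π x) = ψ π x - (if π ∣ x then (1 : ℂ) else 0) := by
          intro x _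
          by_cases hx : π ∣ x
          · rw [if_pos hx, if_pos hx, psi_dvd hπ0 hx]; ring
          · rw [if_neg hx, if_neg hx]; ring
        rw [Finset.sum_congr rfl hsplit, Finset.sum_sub_distrib]
        have hper : ∀ x y : Eisenstein, π ^ 3 ∣ x - y → ψ π x = ψ π y := fun x y hxy =>
          psi_period hπ0 (dvd_trans (dvd_pow_self π three_ne_zero) hxy)
        have hshift := sum_shift hR (ψ π) hper a0
        have hadd : ∀ x : Eisenstein, ψ π (x + a0) = ψ π x * ψ π a0 := fun x => psi_add π x a0
        simp only [hadd] at hshift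
        rw [← Finset.sum_mul] at hshift
        have hS1 : ∑ x ∈ R, ψ π x = 0 := by
          have hz0 : (∑ x ∈ R, ψ π x) * (ψ π a0 - 1) = 0 := by linear_combination hshift
          rcases mul_eq_zero.mp hz0 with h | h
          · exact h
          · exact absurd (by linear_combination h) ha0
        rw [hS1]
        have hsum2 : ∑ x ∈ R, (if π ∣ x then (1 : ℂ) else 0) =
            ((R.filter (fun x => π ∣ x)).card : ℂ) := by
          rw [Finset.sum_boole]
        have hcard : (((R.filter (fun x => π ∣ x)).card : ℕ) : ℤ) = norm (π ^ 2) := by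
          rw [card_dvd_filter hπ0 (S := R) (A := A) (T := R.filter (fun x => π ∣ x))
            (by rw [show π * π ^ 2 = π ^ 3 from by ring]; exact hR) hA
            (fun x => by simp [Finset.mem_filter])]
          exact card_res (pow_ne_zero 2 hπ0) hA
        rw [hsum2, zero_sub]
        congr 1
        exact_mod_cast hcard
      · rw [if_neg hk3]
        have hm2 : 2 ≤ k - 2 := by omega
        set m := k - 2 with hm
        have hkm : k = 2 + m := by omega
        obtain ⟨a0, ha0⟩ := psi_pi_ne_one hπ h1
        set a : Eisenstein := π ^ (m - 1) * a0 with ha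
        have hπa : π ∣ a := by
          rw [ha]
          exact dvd_mul_of_dvd_left (dvd_pow_self π (by omega)) a0
        have hterm : ∀ x ∈ R,
            toC (χ x (π ^ k)) * eE (toC (π ^ 2) * toC x / toC (π ^ k)) =
              toC (χ x π) ^ k * ψ (π ^ m) x := by
          intro x _
          have he : toC (π ^ 2) * toC x / toC (π ^ k) = toC x / toC (π ^ m) := by
            rw [hkm, pow_add, toC_mul, mul_div_mul_left _ _ (toC_ne_zero (pow_ne_zero 2 hπ0))]
          rw [he, chi_pow hχ hπ h1 x k (by omega), toC_pow]
          rfl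
        rw [Finset.sum_congr rfl hterm]
        have hper : ∀ x y : Eisenstein, π ^ k ∣ x - y →
            toC (χ x π) ^ k * ψ (π ^ m) x = toC (χ y π) ^ k * ψ (π ^ m) y := by
          intro x y hxy
          rw [chi_period hχ hπ h1 (dvd_trans (dvd_pow_self π (by omega)) hxy),
            psi_period (pow_ne_zero m hπ0) (dvd_trans (pow_dvd_pow π (by omega)) hxy)]
        have hshift := sum_shift hR (fun x => toC (χ x π) ^ k * ψ (π ^ m) x) hper a
        have hfa : ∀ x : Eisenstein,
            toC (χ (x + a) π) ^ k * ψ (π ^ m) (x + a) =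
              (toC (χ x π) ^ k * ψ (π ^ m) x) * ψ (π ^ m) a := by
          intro x
          rw [psi_add]
          have hchi : χ (x + a) π = χ x π := chi_period hχ hπ h1 (by
            rw [add_sub_cancel_left]; exact hπa)
          rw [hchi]; ring
        simp only [hfa] at hshift
        rw [← Finset.sum_mul] at hshift
        have hpsia : ψ (π ^ m) a = ψ π a0 := by
          rw [ha, show (π : Eisenstein) ^ m = π ^ (m - 1) * π from by
            conv_lhs => rw [show m = (m - 1) + 1 from by omega]
            rw [pow_succ]]
          exact psi_cancel π a0 (pow_ne_zero _ hπ0)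
        rw [hpsia] at hshift
        have hz0 : (∑ x ∈ R, toC (χ x π) ^ k * ψ (π ^ m) x) * (ψ π a0 - 1) = 0 := by
          linear_combination hshift
        rcases mul_eq_zero.mp hz0 with h | h
        · exact h
        · exact absurd (by linear_combination h) ha0
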